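/- Let μ, μ_n be non-atomic Borel probability measures on [0,2) with μ_n → μ in the sense that μ_n[0,y) → μ[0,y) for all y. Then φ(μ_n) → φ(μ) uniformly on ℝ, where φ(μ)(y) = μ[1,2) + Σ_{m∈ℤ} μ(m-y, m]. -/

import Mathlib

open MeasureTheory

/-- Signed interval measure `μ(a,b]`, with the convention `μ(a,b] = -μ[b,a)` when `b < a`. -/
noncomputable def sIoc (μ : Measure ℝ) (a b : ℝ) : ℝ :=
  if a ≤ b then (μ (Set.Ioc a b)).toReal else -((μ (Set.Ico b a)).toReal)

/-- The lift of the circle map associated to a measure `μ` on `[0,2)`: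
`φ(μ)(y) = μ[1,2) + ∑_{m ∈ ℤ} μ(m-y, m]`. -/
noncomputable def phiMap (μ : Measure ℝ) : ℝ → ℝ :=
  fun y => (μ (Set.Ico (1:ℝ) 2)).toReal + ∑' m : ℤ, sIoc μ ((m : ℝ) - y) (m : ℝ)

open Set Filter Topology

/-- The (left-continuous) cumulative distribution function of `ν`. -/
noncomputable def cdfR (ν : Measure ℝ) (x : ℝ) : ℝ := (ν (Set.Iio x)).toReal

lemma cdfR_mono (ν : Measure ℝ) [IsFiniteMeasure ν] : Monotone (cdfR ν) := fun a b h =>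
  ENNReal.toReal_mono (measure_ne_top _ _) (measure_mono (Set.Iio_subset_Iio h))

lemma cdfR_of_nonpos {ν : Measure ℝ} (hsupp : ν (Set.Ico (0:ℝ) 2)ᶜ = 0) {x : ℝ} (hx : x ≤ 0) :
    cdfR ν x = 0 := by
  have h0 : ν (Set.Iio x) = 0 := by
    refine measure_mono_null (fun t ht => ?_) hsupp
    simp only [Set.mem_compl_iff, Set.mem_Ico, not_and_or, not_le]
    exact Or.inl (lt_of_lt_of_le ht hx)
  simp [cdfR, h0]

lemma cdfR_of_ge_two {ν : Measure ℝ} [IsProbabilityMeasure ν]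
    (hsupp : ν (Set.Ico (0:ℝ) 2)ᶜ = 0) {x : ℝ} (hx : (2:ℝ) ≤ x) :
    cdfR ν x = 1 := by
  have h0 : ν (Set.Ici x) = 0 := by
    refine measure_mono_null (fun t ht => ?_) hsupp
    simp only [Set.mem_compl_iff, Set.mem_Ico, not_and_or, not_lt]
    exact Or.inr (le_trans hx ht)
  have h1 : ν (Set.Iio x) = 1 := by
    have hle : (1 : ENNReal) ≤ ν (Set.Iio x) := by
      have := measure_union_le (μ := ν) (Set.Iio x) (Set.Ici x)
      rw [Set.Iio_union_Ici, h0, add_zero, measure_univ] at this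
      exact this
    exact le_antisymm prob_le_one hle
  simp [cdfR, h1]

lemma cdfR_Ico {ν : Measure ℝ} (hsupp : ν (Set.Ico (0:ℝ) 2)ᶜ = 0) (y : ℝ) :
    (ν (Set.Ico 0 y)).toReal = cdfR ν y := by
  have h0 : ν (Set.Iio 0) = 0 := by
    refine measure_mono_null (fun t ht => ?_) hsupp
    simp only [Set.mem_compl_iff, Set.mem_Ico, not_and_or, not_le]
    exact Or.inl ht
  have h1 : ν (Set.Iio y) = ν (Set.Ico 0 y) := by
    refine le_antisymm ?_ (measure_mono (fun t ht => ht.2))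
    calc ν (Set.Iio y) ≤ ν (Set.Iio 0 ∪ Set.Ico 0 y) := by
          refine measure_mono (fun t ht => ?_)
          rcases lt_or_ge t 0 with h | h
          · exact Or.inl h
          · exact Or.inr ⟨h, ht⟩
      _ ≤ ν (Set.Iio 0) + ν (Set.Ico 0 y) := measure_union_le _ _
      _ = ν (Set.Ico 0 y) := by rw [h0, zero_add]
  rw [cdfR, h1]

lemma cdfR_Ico_toReal {ν : Measure ℝ} [IsFiniteMeasure ν] {a b : ℝ} (hab : a ≤ b) :
    (ν (Set.Ico a b)).toReal = cdfR ν b - cdfR ν a := by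
  have hdisj : Disjoint (Set.Iio a) (Set.Ico a b) :=
    Set.disjoint_left.mpr (fun t ht ht' => absurd ht'.1 (not_le.mpr ht))
  have h : ν (Set.Iio b) = ν (Set.Iio a) + ν (Set.Ico a b) := by
    rw [← measure_union hdisj measurableSet_Ico, Set.Iio_union_Ico_eq_Iio hab]
  have h' : cdfR ν b = cdfR ν a + (ν (Set.Ico a b)).toReal := by
    rw [cdfR, cdfR, h, ENNReal.toReal_add (measure_ne_top _ _) (measure_ne_top _ _)]
  linarith

lemma sIoc_eq {ν : Measure ℝ} [IsFiniteMeasure ν] (hatom : ∀ y : ℝ, ν {y} = 0) (a b : ℝ) :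
    sIoc ν a b = cdfR ν b - cdfR ν a := by
  unfold sIoc
  split_ifs with h
  · have hIoc : ν (Set.Ioc a b) = ν (Set.Ico a b) := by
      refine le_antisymm ?_ ?_
      · calc ν (Set.Ioc a b) ≤ ν (Set.Ico a b ∪ {b}) := by
              refine measure_mono (fun t ht => ?_)
              rcases lt_or_eq_of_le ht.2 with h' | h'
              · exact Or.inl ⟨le_of_lt ht.1, h'⟩
              · exact Or.inr h'
          _ ≤ ν (Set.Ico a b) + ν {b} := measure_union_le _ _
          _ = ν (Set.Ico a b) := by rw [hatom b, add_zero]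
      · calc ν (Set.Ico a b) ≤ ν (Set.Ioc a b ∪ {a}) := by
              refine measure_mono (fun t ht => ?_)
              rcases lt_or_eq_of_le ht.1 with h' | h'
              · exact Or.inl ⟨h', le_of_lt ht.2⟩
              · exact Or.inr h'.symm
          _ ≤ ν (Set.Ioc a b) + ν {a} := measure_union_le _ _
          _ = ν (Set.Ioc a b) := by rw [hatom a, add_zero]
    rw [hIoc, cdfR_Ico_toReal h]
  · push_neg at h
    rw [cdfR_Ico_toReal h.le]
    ring

lemma cdfR_eq_cdf {ν : Measure ℝ} [IsProbabilityMeasure ν] (hatom : ∀ y : ℝ, ν {y} = 0)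
    (x : ℝ) : cdfR ν x = ProbabilityTheory.cdf ν x := by
  rw [ProbabilityTheory.cdf_eq_real, cdfR, Measure.real]
  congr 1
  refine le_antisymm (measure_mono Set.Iio_subset_Iic_self) ?_
  calc ν (Set.Iic x) = ν (Set.Iio x ∪ {x}) := by rw [Set.Iio_union_right]
    _ ≤ ν (Set.Iio x) + ν {x} := measure_union_le _ _
    _ = ν (Set.Iio x) := by rw [hatom x, add_zero]

lemma cdfR_continuous {ν : Measure ℝ} [IsProbabilityMeasure ν] (hatom : ∀ y : ℝ, ν {y} = 0) :
    Continuous (cdfR ν) := by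
  have hmono : Monotone (ProbabilityTheory.cdf ν) := ProbabilityTheory.monotone_cdf ν
  have hc : Continuous (ProbabilityTheory.cdf ν) := by
    rw [continuous_iff_continuousAt]
    intro x
    rw [hmono.continuousAt_iff_leftLim_eq_rightLim]
    have hr : Function.rightLim (ProbabilityTheory.cdf ν) x = ProbabilityTheory.cdf ν x :=
      (ProbabilityTheory.cdf ν).rightLim_eq x
    have hs := (ProbabilityTheory.cdf ν).measure_singleton x
    rw [ProbabilityTheory.measure_cdf, hatom x] at hs
    have hle : Function.leftLim (ProbabilityTheory.cdf ν) x ≤ ProbabilityTheory.cdf ν x :=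
      hmono.leftLim_le le_rfl
    have h0 : ProbabilityTheory.cdf ν x - Function.leftLim (ProbabilityTheory.cdf ν) x ≤ 0 :=
      ENNReal.ofReal_eq_zero.mp hs.symm
    rw [hr]
    linarith
  exact hc.congr (fun x => (cdfR_eq_cdf hatom x).symm)

lemma cdfR_int_ne_one {ν : Measure ℝ} [IsProbabilityMeasure ν]
    (hsupp : ν (Set.Ico (0:ℝ) 2)ᶜ = 0) {μ' : Measure ℝ} [IsProbabilityMeasure μ']
    (hsupp' : μ' (Set.Ico (0:ℝ) 2)ᶜ = 0) {m : ℤ} (hm : m ≠ 1) :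
    cdfR ν (m : ℝ) - cdfR μ' (m : ℝ) = 0 := by
  rcases le_or_gt m 0 with h | h
  · have h' : (m : ℝ) ≤ 0 := by exact_mod_cast h
    rw [cdfR_of_nonpos hsupp h', cdfR_of_nonpos hsupp' h', sub_zero]
  · have h2 : (2 : ℤ) ≤ m := by omega
    have h' : (2 : ℝ) ≤ (m : ℝ) := by exact_mod_cast h2
    rw [cdfR_of_ge_two hsupp h', cdfR_of_ge_two hsupp' h', sub_self]

/-- `phiMap` as a finite sum of CDF differences. -/
lemma phiMap_eq {ν : Measure ℝ} [IsProbabilityMeasure ν]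
    (hsupp : ν (Set.Ico (0:ℝ) 2)ᶜ = 0) (hatom : ∀ y : ℝ, ν {y} = 0) (y : ℝ) :
    phiMap ν y = (1 - cdfR ν 1) +
      ∑ m ∈ Finset.Icc (min 1 (⌊y⌋ + 1)) (max 1 (⌈y⌉ + 1)),
        (cdfR ν (m : ℝ) - cdfR ν ((m : ℝ) - y)) := by
  have h12 : (ν (Set.Ico (1:ℝ) 2)).toReal = 1 - cdfR ν 1 := by
    rw [cdfR_Ico_toReal (by norm_num : (1:ℝ) ≤ 2), cdfR_of_ge_two hsupp le_rfl]
  rw [phiMap, h12]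
  congr 1
  rw [tsum_eq_sum (s := Finset.Icc (min 1 (⌊y⌋ + 1)) (max 1 (⌈y⌉ + 1))) ?_]
  · exact Finset.sum_congr rfl (fun m _ => sIoc_eq hatom _ _)
  · intro m hm
    rw [sIoc_eq hatom]
    rw [Finset.mem_Icc, not_and_or] at hm
    rcases hm with hm | hm
    · push_neg at hm
      rw [lt_min_iff] at hm
      have h1 : (m : ℝ) ≤ 0 := by exact_mod_cast (by omega : m ≤ 0)
      have h2 : (m : ℝ) - y ≤ 0 := by
        have hm2 : m ≤ ⌊y⌋ := by omega
        have : (m : ℝ) ≤ y := le_trans (by exact_mod_cast hm2) (Int.floor_le y)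
        linarith
      rw [cdfR_of_nonpos hsupp h1, cdfR_of_nonpos hsupp h2, sub_zero]
    · push_neg at hm
      rw [max_lt_iff] at hm
      have h1 : (2 : ℝ) ≤ (m : ℝ) := by exact_mod_cast (by omega : (2:ℤ) ≤ m)
      have h2 : (2 : ℝ) ≤ (m : ℝ) - y := by
        have hm2 : ⌈y⌉ + 2 ≤ m := by omega
        have : ((⌈y⌉ : ℝ) + 2) ≤ (m : ℝ) := by exact_mod_cast hm2
        have hy : y ≤ (⌈y⌉ : ℝ) := Int.le_ceil y
        linarith
      rw [cdfR_of_ge_two hsupp h1, cdfR_of_ge_two hsupp h2, sub_self]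

theorem phiMap_continuous_in_measure (μ : Measure ℝ) (μs : ℕ → Measure ℝ)
    [IsProbabilityMeasure μ] [∀ k, IsProbabilityMeasure (μs k)]
    (hsupp : μ (Set.Ico (0:ℝ) 2)ᶜ = 0) (hsupps : ∀ k, μs k (Set.Ico (0:ℝ) 2)ᶜ = 0)
    (hatom : ∀ y : ℝ, μ {y} = 0) (hatoms : ∀ k, ∀ y : ℝ, μs k {y} = 0)
    (hconv : ∀ y : ℝ,
      Filter.Tendsto (fun k => (μs k (Set.Ico (0:ℝ) y)).toReal) Filter.atTop
        (nhds ((μ (Set.Ico (0:ℝ) y)).toReal))) :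
    TendstoUniformly (fun k => phiMap (μs k)) (phiMap μ) Filter.atTop := by
  -- pointwise convergence of the CDFs
  have hconv' : ∀ y : ℝ, Tendsto (fun k => cdfR (μs k) y) atTop (nhds (cdfR μ y)) := by
    intro y
    have h1 : (fun k => cdfR (μs k) y) = fun k => (μs k (Set.Ico 0 y)).toReal := by
      funext k; exact (cdfR_Ico (hsupps k) y).symm
    rw [h1, ← cdfR_Ico hsupp y]
    exact hconv y
  -- uniform convergence of the CDFs (Pólya's theorem)
  have hunif : ∀ ε > (0:ℝ), ∀ᶠ k in atTop, ∀ t : ℝ, |cdfR (μs k) t - cdfR μ t| ≤ ε := by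
    intro ε hε
    obtain ⟨δ, hδ, hδ'⟩ : ∃ δ > (0:ℝ), ∀ s ∈ Set.Icc (0:ℝ) 2, ∀ t ∈ Set.Icc (0:ℝ) 2,
        dist s t < δ → dist (cdfR μ s) (cdfR μ t) < ε / 2 := by
      have hc : UniformContinuousOn (cdfR μ) (Set.Icc 0 2) :=
        isCompact_Icc.uniformContinuousOn_of_continuous ((cdfR_continuous hatom).continuousOn)
      exact Metric.uniformContinuousOn_iff.mp hc (ε / 2) (by linarith)
    obtain ⟨n, hn⟩ := exists_nat_gt (2 / δ)
    set p : ℕ → ℝ := fun i => 2 * i / (n + 1) with hp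
    have hnpos : (0:ℝ) < (n:ℝ) + 1 := by positivity
    have hmesh : ∀ i : ℕ, dist (p (i + 1)) (p i) < δ := by
      intro i
      have h1 : p (i + 1) - p i = 2 / ((n:ℝ) + 1) := by
        simp only [hp]
        push_cast
        field_simp
        ring
      rw [Real.dist_eq, h1, abs_of_pos (by positivity)]
      rw [div_lt_iff₀ hnpos]
      have h2 : 2 / δ < (n:ℝ) + 1 := lt_of_lt_of_le hn (by linarith)
      calc (2:ℝ) = (2 / δ) * δ := by field_simp
        _ < ((n:ℝ) + 1) * δ := by exact mul_lt_mul_of_pos_right h2 hδ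
        _ = δ * ((n:ℝ) + 1) := by ring
    have hrange : ∀ i : ℕ, i ≤ n + 1 → p i ∈ Set.Icc (0:ℝ) 2 := by
      intro i hi
      constructor
      · positivity
      · rw [hp, div_le_iff₀ hnpos]
        have : (i:ℝ) ≤ (n:ℝ) + 1 := by exact_mod_cast hi
        linarith
    have hev : ∀ᶠ k in atTop, ∀ i ∈ Finset.range (n + 2),
        |cdfR (μs k) (p i) - cdfR μ (p i)| < ε / 2 := by
      rw [Filter.eventually_all_finset]
      intro i _
      have h := (hconv' (p i)).eventually (Metric.ball_mem_nhds _ (by linarith : (0:ℝ) < ε / 2))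
      filter_upwards [h] with k hk
      rwa [Real.dist_eq] at hk
    filter_upwards [hev] with k hk
    intro t
    rcases le_or_gt t 0 with ht | ht
    · rw [cdfR_of_nonpos (hsupps k) ht, cdfR_of_nonpos hsupp ht, sub_zero, abs_zero]
      linarith
    rcases le_or_gt 2 t with ht2 | ht2
    · rw [cdfR_of_ge_two (hsupps k) ht2, cdfR_of_ge_two hsupp ht2, sub_self, abs_zero]
      linarith
    -- 0 < t < 2 : locate t in the partition
    set m : ℕ := (⌊t * ((n:ℝ) + 1) / 2⌋).toNat with hm
    set i : ℕ := min n m with hi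
    have hin : i ≤ n := min_le_left _ _
    have htn : (0:ℝ) ≤ t * ((n:ℝ) + 1) / 2 := by positivity
    have h0 : (m : ℤ) = ⌊t * ((n:ℝ) + 1) / 2⌋ := by
      rw [hm]; exact Int.toNat_of_nonneg (Int.floor_nonneg.mpr htn)
    have hmR' : (m : ℝ) = ((⌊t * ((n:ℝ) + 1) / 2⌋ : ℤ) : ℝ) := by exact_mod_cast h0
    have hmR : (m : ℝ) ≤ t * ((n:ℝ) + 1) / 2 := by
      rw [hmR']; exact Int.floor_le _
    have hpi : p i ≤ t := by
      have h1 : (i:ℝ) ≤ t * ((n:ℝ) + 1) / 2 := by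
        rcases min_cases n m with ⟨h, hle⟩ | ⟨h, hlt⟩
        · -- i = n, n ≤ m
          rw [hi, h]
          calc ((n:ℝ)) ≤ (m:ℝ) := by exact_mod_cast hle
            _ ≤ _ := hmR
        · rw [hi, h]; exact hmR
      rw [hp, div_le_iff₀ hnpos]
      linarith
    have hpi1 : t ≤ p (i + 1) := by
      have h1 : t * ((n:ℝ) + 1) / 2 ≤ (i:ℝ) + 1 := by
        rcases le_or_gt m n with h | h
        · have hieq : i = m := by omega
          rw [hieq, hmR']
          have := Int.lt_floor_add_one (t * ((n:ℝ) + 1) / 2)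
          linarith
        · have : i = n := by omega
          rw [this]
          have : t * ((n:ℝ) + 1) / 2 ≤ (n:ℝ) + 1 := by
            rw [div_le_iff₀ (by norm_num : (0:ℝ) < 2)]
            nlinarith
          linarith
      rw [hp, le_div_iff₀ hnpos]
      push_cast
      linarith
    have h1 := hk i (Finset.mem_range.mpr (by omega))
    have h2 := hk (i + 1) (Finset.mem_range.mpr (by omega))
    have hFm : |cdfR μ (p (i + 1)) - cdfR μ (p i)| < ε / 2 := by
      have := hδ' (p (i + 1)) (hrange (i + 1) (by omega)) (p i) (hrange i (by omega)) (hmesh i)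
      rwa [Real.dist_eq] at this
    have hmonok := cdfR_mono (μs k)
    have hmonoμ := cdfR_mono μ
    have e1 : cdfR (μs k) t ≤ cdfR (μs k) (p (i + 1)) := hmonok hpi1
    have e2 : cdfR (μs k) (p i) ≤ cdfR (μs k) t := hmonok hpi
    have e3 : cdfR μ (p i) ≤ cdfR μ t := hmonoμ hpi
    have e4 : cdfR μ t ≤ cdfR μ (p (i + 1)) := hmonoμ hpi1
    rw [abs_lt] at h1 h2 hFm
    rw [abs_le]
    constructor <;> linarith
  -- main estimate
  rw [Metric.tendstoUniformly_iff]
  intro ε hε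
  filter_upwards [hunif (ε / 5) (by linarith)] with k hk
  intro y
  rw [Real.dist_eq, phiMap_eq hsupp hatom y, phiMap_eq (hsupps k) (hatoms k) y]
  set S : Finset ℤ := Finset.Icc (min 1 (⌊y⌋ + 1)) (max 1 (⌈y⌉ + 1)) with hS
  have key : (1 - cdfR μ 1 + ∑ m ∈ S, (cdfR μ (m : ℝ) - cdfR μ ((m : ℝ) - y)))
      - (1 - cdfR (μs k) 1 + ∑ m ∈ S, (cdfR (μs k) (m : ℝ) - cdfR (μs k) ((m : ℝ) - y)))
      = (cdfR (μs k) 1 - cdfR μ 1)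
        - ((∑ m ∈ S, (cdfR (μs k) (m : ℝ) - cdfR μ (m : ℝ)))
          - (∑ m ∈ S, (cdfR (μs k) ((m : ℝ) - y) - cdfR μ ((m : ℝ) - y)))) := by
    simp only [Finset.sum_sub_distrib]
    ring
  rw [key]
  -- bound the three pieces
  have b1 : |cdfR (μs k) 1 - cdfR μ 1| ≤ ε / 5 := hk 1
  have b2 : |∑ m ∈ S, (cdfR (μs k) (m : ℝ) - cdfR μ (m : ℝ))| ≤ ε / 5 := by
    have h1S : (1:ℤ) ∈ S := by
      rw [hS, Finset.mem_Icc]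
      exact ⟨min_le_left _ _, le_max_left _ _⟩
    rw [Finset.sum_eq_single_of_mem 1 h1S
      (fun m _ hm => cdfR_int_ne_one (hsupps k) hsupp hm)]
    exact_mod_cast hk 1
  have b3 : |∑ m ∈ S, (cdfR (μs k) ((m : ℝ) - y) - cdfR μ ((m : ℝ) - y))| ≤ 2 * (ε / 5) := by
    set T : Finset ℤ := {⌊y⌋ + 1, ⌊y⌋ + 2} with hT
    have hTzero : ∀ m : ℤ, m ∉ T → cdfR (μs k) ((m : ℝ) - y) - cdfR μ ((m : ℝ) - y) = 0 := by
      intro m hmT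
      rw [hT, Finset.mem_insert, Finset.mem_singleton] at hmT
      push_neg at hmT
      rcases le_or_gt m ⌊y⌋ with h | h
      · have h' : (m : ℝ) - y ≤ 0 := by
          have : (m : ℝ) ≤ y := le_trans (by exact_mod_cast h) (Int.floor_le y)
          linarith
        rw [cdfR_of_nonpos (hsupps k) h', cdfR_of_nonpos hsupp h', sub_zero]
      · have h3 : ⌊y⌋ + 3 ≤ m := by omega
        have h' : (2 : ℝ) ≤ (m : ℝ) - y := by
          have h4 : ((⌊y⌋ : ℝ) + 3) ≤ (m : ℝ) := by exact_mod_cast h3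
          have h5 : y < (⌊y⌋ : ℝ) + 1 := Int.lt_floor_add_one y
          linarith
        rw [cdfR_of_ge_two (hsupps k) h', cdfR_of_ge_two hsupp h', sub_self]
    calc |∑ m ∈ S, (cdfR (μs k) ((m : ℝ) - y) - cdfR μ ((m : ℝ) - y))|
        ≤ ∑ m ∈ S, |cdfR (μs k) ((m : ℝ) - y) - cdfR μ ((m : ℝ) - y)| :=
          Finset.abs_sum_le_sum_abs _ _
      _ = ∑ m ∈ S ∩ T, |cdfR (μs k) ((m : ℝ) - y) - cdfR μ ((m : ℝ) - y)| := by
          refine (Finset.sum_subset Finset.inter_subset_left (fun x hx hx' => ?_)).symm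
          have hxT : x ∉ T := fun h => hx' (Finset.mem_inter.mpr ⟨hx, h⟩)
          rw [hTzero x hxT, abs_zero]
      _ ≤ ∑ m ∈ T, |cdfR (μs k) ((m : ℝ) - y) - cdfR μ ((m : ℝ) - y)| :=
          Finset.sum_le_sum_of_subset_of_nonneg Finset.inter_subset_right
            (fun _ _ _ => abs_nonneg _)
      _ ≤ 2 * (ε / 5) := by
          rw [hT, Finset.sum_pair (by omega : ⌊y⌋ + 1 ≠ ⌊y⌋ + 2)]
          have := hk ((((⌊y⌋:ℤ) + 1 : ℤ) : ℝ) - y)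
          have := hk ((((⌊y⌋:ℤ) + 2 : ℤ) : ℝ) - y)
          linarith [hk (((⌊y⌋ + 1 : ℤ) : ℝ) - y), hk (((⌊y⌋ + 2 : ℤ) : ℝ) - y)]
  calc |(cdfR (μs k) 1 - cdfR μ 1)
        - ((∑ m ∈ S, (cdfR (μs k) (m : ℝ) - cdfR μ (m : ℝ)))
          - (∑ m ∈ S, (cdfR (μs k) ((m : ℝ) - y) - cdfR μ ((m : ℝ) - y))))|
      ≤ |cdfR (μs k) 1 - cdfR μ 1|
        + (|∑ m ∈ S, (cdfR (μs k) (m : ℝ) - cdfR μ (m : ℝ))|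
          + |∑ m ∈ S, (cdfR (μs k) ((m : ℝ) - y) - cdfR μ ((m : ℝ) - y))|) := by
        refine le_trans (abs_sub _ _) ?_
        exact add_le_add le_rfl (abs_sub _ _)
    _ ≤ ε / 5 + (ε / 5 + 2 * (ε / 5)) := by linarith
    _ < ε := by linarith
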